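/- Let h : ℝᵖ × D → ℝ be differentiable in the parameters, (xᵢ, yᵢ), i = 1..n training data with yᵢ ∈ {−1,1}, ℓ the binary cross-entropy, L(w) = (1/n) Σᵢ ℓ(yᵢ, h(w, xᵢ)) the training loss, and g(w) = ℓ'(y_I, h(w,x_I)) ∇_w h(w, x_I) − ∇_w L(w) the mini-batch (batch size 1) gradient noise where I is uniform on {1,...,n}. If ‖∇_w h(w, x)‖ ≤ M for all x, then E[‖g(w)‖²] ≤ M² L(w). -/

import Mathlib

open Real

/-- Derivative of the binary cross-entropy `z ↦ log (1 + exp (-y z))`. -/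
lemma bce_hasDerivAt (y z : ℝ) :
    HasDerivAt (fun z : ℝ => Real.log (1 + Real.exp (-y * z)))
      (-y * Real.exp (-y * z) / (1 + Real.exp (-y * z))) z := by
  have hpos : 0 < 1 + Real.exp (-y * z) := by positivity
  have h1 : HasDerivAt (fun z : ℝ => -y * z) (-y) z := by
    simpa using (hasDerivAt_id z).const_mul (-y)
  have h2 : HasDerivAt (fun z : ℝ => 1 + Real.exp (-y * z))
      (Real.exp (-y * z) * -y) z := ((Real.hasDerivAt_exp _).comp z h1).const_add 1
  have h3 := (Real.hasDerivAt_log hpos.ne').comp z h2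
  have heq : -y * Real.exp (-y * z) / (1 + Real.exp (-y * z))
      = (1 + Real.exp (-y * z))⁻¹ * (Real.exp (-y * z) * -y) := by
    rw [div_eq_mul_inv]; ring
  rw [heq]; exact h3

/-- Self-bounding property: `(ℓ')² ≤ ℓ` for binary cross-entropy with `y = ±1`. -/
lemma bce_self_bounding {y : ℝ} (hy : y = -1 ∨ y = 1) (z : ℝ) :
    (-y * Real.exp (-y * z) / (1 + Real.exp (-y * z))) ^ 2
      ≤ Real.log (1 + Real.exp (-y * z)) := by
  set t := Real.exp (-y * z) with ht
  have htpos : 0 < t := Real.exp_pos _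
  have hy2 : y ^ 2 = 1 := by rcases hy with h | h <;> simp [h]
  have h1 : (-y * t / (1 + t)) ^ 2 = (t / (1 + t)) ^ 2 := by
    rw [div_pow, div_pow, mul_pow, neg_pow, hy2]; ring_nf
  rw [h1]
  have hfrac0 : 0 ≤ t / (1 + t) := by positivity
  have hfrac1 : t / (1 + t) ≤ 1 := by
    rw [div_le_one (by positivity)]; linarith
  have hsq : (t / (1 + t)) ^ 2 ≤ t / (1 + t) := by
    calc (t / (1 + t)) ^ 2 = (t / (1 + t)) * (t / (1 + t)) := sq _
    _ ≤ 1 * (t / (1 + t)) := by gcongr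
    _ = t / (1 + t) := one_mul _
  refine hsq.trans ?_
  -- t/(1+t) ≤ log (1+t) via log x ≤ x - 1 applied to x = 1/(1+t)
  have hlog := Real.log_le_sub_one_of_pos (x := 1 / (1 + t)) (by positivity)
  rw [Real.log_div one_ne_zero (by positivity : (1:ℝ) + t > 0).ne', Real.log_one] at hlog
  have : 1 / (1 + t) - 1 = -(t / (1 + t)) := by field_simp; ring
  linarith [this ▸ hlog]

/-- Upper bound on the SGD (batch size 1) gradient-noise scale:
`E[‖g(w)‖²] ≤ M² L(w)` where `g(w) = ℓ'(y_I, h(w,x_I)) ∇h(w,x_I) − ∇L(w)`,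
`I` uniform on the `n` training points, `ℓ` the binary cross-entropy, and
`‖∇_w h(w,x)‖ ≤ M`. -/
theorem sgd_noise_upper_bound {p n : ℕ} {D : Type*} (hn : 0 < n)
    (h : EuclideanSpace ℝ (Fin p) → D → ℝ)
    (x : Fin n → D) (y : Fin n → ℝ) (hy : ∀ i, y i = -1 ∨ y i = 1)
    (hdiff : ∀ d, Differentiable ℝ (fun w => h w d))
    (M : ℝ) (hM : ∀ w d, ‖gradient (fun w' => h w' d) w‖ ≤ M)
    (w : EuclideanSpace ℝ (Fin p)) :
    (1 / n : ℝ) * ∑ i, ‖(deriv (fun z : ℝ => Real.log (1 + Real.exp (-(y i) * z)))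
          (h w (x i))) • gradient (fun w' => h w' (x i)) w -
        gradient (fun w' => (1 / n : ℝ) *
          ∑ j, Real.log (1 + Real.exp (-(y j) * h w' (x j)))) w‖ ^ 2
      ≤ M ^ 2 * ((1 / n : ℝ) * ∑ i, Real.log (1 + Real.exp (-(y i) * h w (x i)))) := by
  classical
  -- abbreviations
  set g : Fin n → EuclideanSpace ℝ (Fin p) := fun i => gradient (fun w' => h w' (x i)) w with hg
  set c : Fin n → ℝ := fun i =>
    -(y i) * Real.exp (-(y i) * h w (x i)) / (1 + Real.exp (-(y i) * h w (x i))) with hc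
  have hderiv : ∀ i, deriv (fun z : ℝ => Real.log (1 + Real.exp (-(y i) * z)))
      (h w (x i)) = c i := fun i => (bce_hasDerivAt (y i) (h w (x i))).deriv
  set a : Fin n → EuclideanSpace ℝ (Fin p) := fun i => c i • g i with ha
  -- each component has a gradient
  have hGradi : ∀ i, HasGradientAt (fun w' => Real.log (1 + Real.exp (-(y i) * h w' (x i))))
      (a i) w := by
    intro i
    have hf : HasFDerivAt (fun w' => h w' (x i))
        (InnerProductSpace.toDual ℝ (EuclideanSpace ℝ (Fin p)) (g i)) w := by
      exact ((hdiff (x i)) w).hasGradientAt.hasFDerivAt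
    have hφ := bce_hasDerivAt (y i) (h w (x i))
    have := hφ.comp_hasFDerivAt w hf
    rw [hasGradientAt_iff_hasFDerivAt]
    convert this using 1
    · rfl
    · rfl
    simp only [ha, map_smul, hc, neg_mul]
  -- gradient of the total loss
  have hGradL : HasGradientAt (fun w' => (1 / n : ℝ) *
      ∑ j, Real.log (1 + Real.exp (-(y j) * h w' (x j)))) ((1 / n : ℝ) • ∑ j, a j) w := by
    have hsum : HasFDerivAt (fun w' : EuclideanSpace ℝ (Fin p) => ∑ j, Real.log (1 + Real.exp (-(y j) * h w' (x j))))
        (∑ j, InnerProductSpace.toDual ℝ (EuclideanSpace ℝ (Fin p)) (a j)) w :=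
      HasFDerivAt.fun_sum fun j _ => (hGradi j).hasFDerivAt
    have := hsum.const_mul (1 / n : ℝ)
    rw [hasGradientAt_iff_hasFDerivAt]
    convert this using 1
    · rfl
    simp [map_smul, map_sum]
  set G : EuclideanSpace ℝ (Fin p) := (1 / n : ℝ) • ∑ j, a j with hG
  have hLgrad : gradient (fun w' => (1 / n : ℝ) *
      ∑ j, Real.log (1 + Real.exp (-(y j) * h w' (x j)))) w = G := hGradL.gradient
  -- rewrite goal
  rw [hLgrad]
  simp only [hderiv]
  have hnpos : (0 : ℝ) < n := by exact_mod_cast hn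
  -- key variance inequality: ∑ ‖a i - G‖² ≤ ∑ ‖a i‖²
  have hsumaG : (∑ i, a i) = (n : ℝ) • G := by
    rw [hG, smul_smul]
    rw [mul_one_div, div_self hnpos.ne', one_smul]
  have hvar : ∑ i, ‖a i - G‖ ^ 2 ≤ ∑ i, ‖a i‖ ^ 2 := by
    have hexp : ∀ i, ‖a i - G‖ ^ 2 = ‖a i‖ ^ 2 - 2 * (inner ℝ (a i) G : ℝ) + ‖G‖ ^ 2 :=
      fun i => norm_sub_sq_real _ _
    have hinner : ∑ i, (inner ℝ (a i) G : ℝ) = (n : ℝ) * ‖G‖ ^ 2 := by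
      rw [← sum_inner, hsumaG, real_inner_smul_left, real_inner_self_eq_norm_sq]
    calc ∑ i, ‖a i - G‖ ^ 2
        = ∑ i, ‖a i‖ ^ 2 - 2 * ((n : ℝ) * ‖G‖ ^ 2) + (n : ℝ) * ‖G‖ ^ 2 := by
          simp only [hexp, Finset.sum_add_distrib, Finset.sum_sub_distrib,
            ← Finset.mul_sum, hinner, Finset.sum_const, Finset.card_univ,
            Fintype.card_fin, nsmul_eq_mul]
          try ring
      _ = ∑ i, ‖a i‖ ^ 2 - (n : ℝ) * ‖G‖ ^ 2 := by ring
      _ ≤ ∑ i, ‖a i‖ ^ 2 := by nlinarith [sq_nonneg ‖G‖]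
  -- termwise bound ‖a i‖² ≤ M² * ℓ i
  have hterm : ∀ i, ‖a i‖ ^ 2 ≤ M ^ 2 * Real.log (1 + Real.exp (-(y i) * h w (x i))) := by
    intro i
    have hcsq : (c i) ^ 2 ≤ Real.log (1 + Real.exp (-(y i) * h w (x i))) :=
      bce_self_bounding (hy i) (h w (x i))
    have hM0 : 0 ≤ M := le_trans (norm_nonneg _) (hM w (x i))
    have hgsq : ‖g i‖ ^ 2 ≤ M ^ 2 := by
      have := hM w (x i)
      nlinarith [norm_nonneg (g i)]
    calc ‖a i‖ ^ 2 = (c i) ^ 2 * ‖g i‖ ^ 2 := by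
          rw [ha, norm_smul, mul_pow]
          simp [sq_abs]
      _ ≤ Real.log (1 + Real.exp (-(y i) * h w (x i))) * M ^ 2 := by
          apply mul_le_mul hcsq hgsq (by positivity) ?_
          exact le_trans (sq_nonneg _) hcsq
      _ = M ^ 2 * Real.log (1 + Real.exp (-(y i) * h w (x i))) := mul_comm _ _
  calc (1 / n : ℝ) * ∑ i, ‖a i - G‖ ^ 2
      ≤ (1 / n : ℝ) * ∑ i, ‖a i‖ ^ 2 := by
        apply mul_le_mul_of_nonneg_left hvar (by positivity)
    _ ≤ (1 / n : ℝ) * ∑ i, M ^ 2 * Real.log (1 + Real.exp (-(y i) * h w (x i))) := by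
        apply mul_le_mul_of_nonneg_left (Finset.sum_le_sum fun i _ => hterm i) (by positivity)
    _ = M ^ 2 * ((1 / n : ℝ) * ∑ i, Real.log (1 + Real.exp (-(y i) * h w (x i)))) := by
        rw [← Finset.mul_sum]; ring
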